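/- Let A be a left brace and let a ∈ A be an element of infinite additive order. Let c = a ⋆ a and suppose a ⋆ c = 0. Then ⟨a⟩ ∩ ⟨c⟩ = 0. In particular, if a ∈ ζ₂(⋆,A) has infinite additive order, then ⟨a⟩ ∩ ⟨a ⋆ a⟩ = 0. -/

import Mathlib

/-!
Basic theory of left braces (skew left braces of abelian type), following
Dixon–Kurdachenko–Subbotin, "On the structure of braces whose subideals are ideals".
-/

universe u v

/-- A left brace: an abelian group `(A,+)`, a group `(A,·)`, satisfying
`a(b+c) = ab + ac - a`.  (The additive and multiplicative identities then coincide.) -/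
class LeftBrace (A : Type u) extends AddCommGroup A, Group A where
  mul_add_eq : ∀ a b c : A, a * (b + c) = a * b + a * c - a

namespace LeftBrace

variable {A : Type u} [LeftBrace A]

/-- The star operation `a ⋆ b = ab - a - b`. -/
def bstar (a b : A) : A := a * b - a - b

/-- A subset of a left brace is a subbrace if it is closed under the additive-group
and multiplicative-group operations (equivalently, it is a left brace under the
restricted operations). -/
structure IsSubbrace (S : Set A) : Prop where
  zero_mem : (0 : A) ∈ S
  add_mem : ∀ {a b : A}, a ∈ S → b ∈ S → a + b ∈ S
  neg_mem : ∀ {a : A}, a ∈ S → -a ∈ S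
  mul_mem : ∀ {a b : A}, a ∈ S → b ∈ S → a * b ∈ S
  inv_mem : ∀ {a : A}, a ∈ S → a⁻¹ ∈ S

/-- `I` is an ideal of the subbrace `J`: `I ⊆ J`, both are subbraces, and
`a ⋆ z, z ⋆ a ∈ I` for all `a ∈ J`, `z ∈ I`. -/
structure IsIdealIn (I J : Set A) : Prop where
  subset : I ⊆ J
  subbrace : IsSubbrace I
  ambient_subbrace : IsSubbrace J
  star_mem_left : ∀ a ∈ J, ∀ z ∈ I, bstar a z ∈ I
  star_mem_right : ∀ a ∈ J, ∀ z ∈ I, bstar z a ∈ I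

/-- `I` is an ideal of the brace `A`. -/
def IsIdeal (I : Set A) : Prop := IsIdealIn I (Set.univ : Set A)

/-- `A` is a T-brace if being an ideal is a transitive relation: an ideal of an
ideal of `A` is an ideal of `A`. -/
def IsTBrace (A : Type u) [LeftBrace A] : Prop :=
  ∀ I J : Set A, IsIdealIn I J → IsIdeal J → IsIdeal I

/-- The `⋆`-center `ζ(⋆,A) = {a | a ⋆ x = x ⋆ a = 0 for all x}`. -/
def starCenter (A : Type u) [LeftBrace A] : Set A :=
  {a : A | ∀ x : A, bstar a x = 0 ∧ bstar x a = 0}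

/-- The preimage in `A` of the `⋆`-center of the quotient of `A` by (the ideal) `S`:
`a` belongs to it iff `a ⋆ x ∈ S` and `x ⋆ a ∈ S` for every `x ∈ A`. -/
def nextCenter (A : Type u) [LeftBrace A] (S : Set A) : Set A :=
  {a : A | ∀ x : A, bstar a x ∈ S ∧ bstar x a ∈ S}

/-- The upper `⋆`-central series, indexed by naturals:
`ζ₀(⋆,A) = 0` and `ζ_{n+1}(⋆,A)/ζ_n(⋆,A) = ζ(⋆, A/ζ_n(⋆,A))`. -/
def zetaNat (A : Type u) [LeftBrace A] : ℕ → Set A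
  | 0 => ({0} : Set A)
  | n + 1 => nextCenter A (zetaNat A n)

/-- The upper `⋆`-central series, indexed by ordinals (unions at limit ordinals). -/
noncomputable def zetaOrd (A : Type u) [LeftBrace A] (o : Ordinal.{v}) : Set A :=
  Ordinal.limitRecOn o (({0} : Set A))
    (fun _ ih => nextCenter A ih)
    (fun o _ ih => ⋃ (o' : Ordinal) (h : o' < o), ih o' h)

/-- The upper `⋆`-hypercenter `ζ_∞(⋆,A)`: the final (stable) term of the upper
`⋆`-central series, i.e. the union of all its terms. -/
noncomputable def starHypercenter (A : Type u) [LeftBrace A] : Set A :=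
  ⋃ o : Ordinal.{u}, zetaOrd A o

/-- `A` is `⋆`-hypercentral if `A = ζ_γ(⋆,A)` for some ordinal `γ`. -/
def IsStarHypercentral (A : Type u) [LeftBrace A] : Prop :=
  ∃ γ : Ordinal.{u}, zetaOrd A γ = (Set.univ : Set A)

/-- `K ⋆ L`: the additive subgroup of `(A,+)` generated by all `x ⋆ y`, `x ∈ K`, `y ∈ L`. -/
def setStar (K L : Set A) : AddSubgroup A :=
  AddSubgroup.closure {z : A | ∃ x ∈ K, ∃ y ∈ L, z = bstar x y}

/-- `rightStarSeries A n = A^{(n+1)}`, where `A^{(1)} = A` and `A^{(n+1)} = A^{(n)} ⋆ A`. -/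
def rightStarSeries (A : Type u) [LeftBrace A] : ℕ → Set A
  | 0 => (Set.univ : Set A)
  | n + 1 => ((setStar (rightStarSeries A n) (Set.univ : Set A) : AddSubgroup A) : Set A)

/-- `leftStarSeries A n = A^{n+1}`, where `A^1 = A` and `A^{n+1} = A ⋆ A^n`. -/
def leftStarSeries (A : Type u) [LeftBrace A] : ℕ → Set A
  | 0 => (Set.univ : Set A)
  | n + 1 => ((setStar (Set.univ : Set A) (leftStarSeries A n) : AddSubgroup A) : Set A)

/-- `A` is Smoktunowicz-nilpotent if `A^{(n)} = A^k = 0` for some naturals `n, k`. -/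
def IsSmoktunowiczNilpotent (A : Type u) [LeftBrace A] : Prop :=
  ∃ n k : ℕ, rightStarSeries A n = ({0} : Set A) ∧ leftStarSeries A k = ({0} : Set A)

/-- The subbrace generated by a subset `M`: the intersection of all subbraces containing `M`. -/
def braceClosure (M : Set A) : Set A := ⋂₀ {S : Set A | IsSubbrace S ∧ M ⊆ S}

end LeftBrace

open LeftBrace in
/-- **Proposition.** Let `A` be a left brace, `a` of infinite additive order,
`c = a ⋆ a` with `a ⋆ c = 0`.  Then `⟨a⟩ ∩ ⟨c⟩ = 0`.  In particular, if `a ∈ ζ₂(⋆,A)`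
has infinite additive order, then `⟨a⟩ ∩ ⟨a ⋆ a⟩ = 0`. -/
theorem zmultiples_inf_zmultiples_bstar_self_eq_bot
    {A : Type u} [LeftBrace A] :
    (∀ a : A, ¬ IsOfFinAddOrder a → bstar a (bstar a a) = 0 →
      AddSubgroup.zmultiples a ⊓ AddSubgroup.zmultiples (bstar a a) = ⊥) ∧
    (∀ a : A, a ∈ zetaNat A 2 → ¬ IsOfFinAddOrder a →
      AddSubgroup.zmultiples a ⊓ AddSubgroup.zmultiples (bstar a a) = ⊥) := by
  have mulzero : ∀ a : A, a * 0 = a := by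
    intro a
    have h := LeftBrace.mul_add_eq a 0 0
    simp only [add_zero] at h
    have h2 : a * 0 + a = a * 0 + a * 0 := by
      rw [← sub_add_cancel (a * 0 + a * 0) a, ← h]
    exact (add_left_cancel h2).symm
  have lam : ∀ a : A, ∃ f : A →+ A, ∀ x, f x = a * x - a := by
    intro a
    refine ⟨AddMonoidHom.mk' (fun x => a * x - a) ?_, fun x => rfl⟩
    intro x y
    simp only [LeftBrace.mul_add_eq]
    abel
  have main : ∀ a : A, ¬ IsOfFinAddOrder a → bstar a (bstar a a) = 0 →
      AddSubgroup.zmultiples a ⊓ AddSubgroup.zmultiples (bstar a a) = ⊥ := by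
    intro a ha hc
    set c := bstar a a with hcdef
    obtain ⟨f, hf⟩ := lam a
    have hfa : f a = c + a := by rw [hf, hcdef]; simp only [bstar]; abel
    have hfc : f c = c := by
      rw [hf]
      exact sub_eq_zero.mp hc
    rw [eq_bot_iff]
    intro x hx
    rw [AddSubgroup.mem_inf] at hx
    obtain ⟨⟨n, hn⟩, ⟨m, hm⟩⟩ := hx
    simp only at hn hm
    have h1 : f x = n • c + x := by
      rw [← hn, map_zsmul, hfa, smul_add, hn]
    have h2 : f x = x := by rw [← hm, map_zsmul, hfc]
    have hnc : n • c = 0 := by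
      have h3 := h1.symm.trans h2
      rwa [add_eq_right] at h3
    have hnx : n • x = 0 := by rw [← hm, smul_comm, hnc, smul_zero]
    have hnna : (n * n) • a = 0 := by rw [mul_smul, hn, hnx]
    have hn0 : n = 0 := by
      by_contra h
      exact ha (isOfFinAddOrder_iff_zsmul_eq_zero.mpr ⟨n * n, mul_ne_zero h h, hnna⟩)
    simpa [hn0] using hn.symm
  refine ⟨main, fun a ha hfin => main a hfin ?_⟩
  have h1 : bstar a a ∈ zetaNat A 1 := (ha a).1
  have h2 := (h1 a).2
  simpa [zetaNat, nextCenter] using h2
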